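/- Let K = ℚ(i) and let m, n ∈ ℤ[i] be nonzero with m² ≠ n², such that m² − n² is a square in ℤ[i]. Then the Mordell–Weil group E(K) of the elliptic curve E over K given by y² = x(x + m²)(x + n²) contains a subgroup isomorphic to ℤ/4ℤ ⊕ ℤ/4ℤ. -/

import Mathlib

open WeierstrassCurve.Affine

section Aux

variable {G : Type*} [AddCommGroup G]

private lemma aux_even {T : G} (hT : T + T = 0) {c : ℤ} (hc : Even c) : c • T = 0 := by
  obtain ⟨k, rfl⟩ := hc
  rw [add_zsmul, ← smul_add, hT, smul_zero]

private lemma aux_odd {T : G} (hT : T + T = 0) {c : ℤ} (hc : Odd c) : c • T = T := by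
  obtain ⟨k, rfl⟩ := hc
  rw [add_zsmul, one_zsmul, aux_even hT ⟨k, (two_mul k)⟩, zero_add]

private lemma aux_opp {T₀ T₁ : G} (hT₀ : T₀ + T₀ = 0) (hT₁ : T₁ + T₁ = 0)
    (h0 : T₀ ≠ 0) (h1 : T₁ ≠ 0) (hne : T₀ ≠ T₁) {c d : ℤ}
    (h : c • T₀ = d • T₁) : c • T₀ = 0 ∧ d • T₁ = 0 := by
  rcases Int.even_or_odd c with hc | hc <;> rcases Int.even_or_odd d with hd | hd
  · exact ⟨aux_even hT₀ hc, aux_even hT₁ hd⟩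
  · rw [aux_even hT₀ hc, aux_odd hT₁ hd] at h; exact absurd h.symm h1
  · rw [aux_odd hT₀ hc, aux_even hT₁ hd] at h; exact absurd h h0
  · rw [aux_odd hT₀ hc, aux_odd hT₁ hd] at h; exact absurd h hne

private lemma aux_subgroup (P Q : G)
    (hP2 : (2 : ℤ) • P ≠ 0) (hQ2 : (2 : ℤ) • Q ≠ 0) (hPQ : (2 : ℤ) • P ≠ (2 : ℤ) • Q)
    (hP4 : (2 : ℤ) • P + (2 : ℤ) • P = 0) (hQ4 : (2 : ℤ) • Q + (2 : ℤ) • Q = 0) :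
    ∃ H : AddSubgroup G, Nonempty (H ≃+ (ZMod 4 × ZMod 4)) := by
  have hsm : ∀ (k : ℤ) (x : G), (k + k) • x = k • ((2 : ℤ) • x) := fun k x => by
    rw [add_zsmul, smul_comm k (2 : ℤ) x, two_zsmul]
  have key : ∀ c d : ℤ, c • P + d • Q = 0 → c • P = 0 ∧ d • Q = 0 := by
    intro c d h
    have h' : c • P = (-d) • Q := by
      rw [neg_smul, eq_neg_iff_add_eq_zero]; exact h
    have h2 : c • ((2 : ℤ) • P) = (-d) • ((2 : ℤ) • Q) := by
      rw [smul_comm c (2 : ℤ) P, h', smul_comm (2 : ℤ) (-d) Q]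
    have hceven : Even c := by
      by_contra hc
      rw [Int.not_even_iff_odd] at hc
      have := (aux_opp hP4 hQ4 hP2 hQ2 hPQ h2).1
      rw [aux_odd hP4 hc] at this
      exact hP2 this
    have hdeven : Even d := by
      by_contra hd
      rw [Int.not_even_iff_odd] at hd
      have := (aux_opp hP4 hQ4 hP2 hQ2 hPQ h2).2
      rw [aux_odd hQ4 hd.neg] at this
      exact hQ2 this
    obtain ⟨c', rfl⟩ := hceven
    obtain ⟨d', rfl⟩ := hdeven
    have hdQ' : (-(d' + d')) • Q = (-d') • ((2 : ℤ) • Q) := by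
      rw [show -(d' + d') = (-d') + (-d') by ring, hsm]
    have h'' : c' • ((2 : ℤ) • P) = (-d') • ((2 : ℤ) • Q) := by
      rw [← hsm, ← hdQ']; exact h'
    obtain ⟨hc1, hd1⟩ := aux_opp hP4 hQ4 hP2 hQ2 hPQ h''
    constructor
    · rw [hsm, hc1]
    · have : (-(d' + d')) • Q = 0 := by rw [hdQ', hd1]
      rw [neg_smul, neg_eq_zero] at this
      exact this
  have ord4 : ∀ x : G, ((2 : ℤ) • x ≠ 0) → ((2 : ℤ) • x + (2 : ℤ) • x = 0) →
      ∀ c : ℤ, c • x = 0 → (4 : ℤ) ∣ c := by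
    intro x hx2 hx4 c hc
    have hc2 : c • ((2 : ℤ) • x) = 0 := by
      rw [smul_comm, hc, smul_zero]
    have hceven : Even c := by
      by_contra h
      rw [Int.not_even_iff_odd] at h
      rw [aux_odd hx4 h] at hc2
      exact hx2 hc2
    obtain ⟨c', rfl⟩ := hceven
    have hc' : c' • ((2 : ℤ) • x) = 0 := by rw [← hsm, hc]
    have hc'even : Even c' := by
      by_contra h
      rw [Int.not_even_iff_odd] at h
      rw [aux_odd hx4 h] at hc'
      exact hx2 hc'
    obtain ⟨k, rfl⟩ := hc'even
    exact ⟨k, by ring⟩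
  have h4P : (zmultiplesHom G P) ((4 : ℕ) : ℤ) = 0 := by
    rw [zmultiplesHom_apply, show ((4 : ℕ) : ℤ) = (2 : ℤ) + 2 by norm_num, add_zsmul, hP4]
  have h4Q : (zmultiplesHom G Q) ((4 : ℕ) : ℤ) = 0 := by
    rw [zmultiplesHom_apply, show ((4 : ℕ) : ℤ) = (2 : ℤ) + 2 by norm_num, add_zsmul, hQ4]
  have hg : ∀ (x : G) (h4 : (zmultiplesHom G x) ((4 : ℕ) : ℤ) = 0) (a : ZMod 4),
      ZMod.lift 4 ⟨zmultiplesHom G x, h4⟩ a = (a.val : ℤ) • x := by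
    intro x h4 a
    conv_lhs => rw [← ZMod.natCast_rightInverse a]
    rw [show ((a.val : ℕ) : ZMod 4) = (((a.val : ℕ) : ℤ) : ZMod 4) by push_cast; rfl,
      ZMod.lift_coe, zmultiplesHom_apply]
  set f : ZMod 4 × ZMod 4 →+ G :=
    (ZMod.lift 4 ⟨zmultiplesHom G P, h4P⟩).coprod (ZMod.lift 4 ⟨zmultiplesHom G Q, h4Q⟩) with hf
  have hinj : Function.Injective f := by
    rw [injective_iff_map_eq_zero]
    rintro ⟨a, b⟩ hab
    rw [hf, AddMonoidHom.coprod_apply, hg P h4P a, hg Q h4Q b] at hab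
    obtain ⟨ha, hb⟩ := key _ _ hab
    have ha4 : (4 : ℤ) ∣ ((a.val : ℕ) : ℤ) := ord4 P hP2 hP4 _ ha
    have hb4 : (4 : ℤ) ∣ ((b.val : ℕ) : ℤ) := ord4 Q hQ2 hQ4 _ hb
    have haval : a.val = 0 := by
      have h1 : (4 : ℕ) ∣ a.val := by exact_mod_cast ha4
      have h2 : a.val < 4 := a.val_lt
      omega
    have hbval : b.val = 0 := by
      have h1 : (4 : ℕ) ∣ b.val := by exact_mod_cast hb4
      have h2 : b.val < 4 := b.val_lt
      omega
    exact Prod.ext ((ZMod.val_eq_zero a).mp haval) ((ZMod.val_eq_zero b).mp hbval)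
  exact ⟨f.range, ⟨(AddMonoidHom.ofInjective hinj).symm⟩⟩

private lemma point_eq {R : Type*} [CommRing R] {W : WeierstrassCurve.Affine R}
    {x₁ y₁ x₂ y₂ : R} (h₁ : W.Nonsingular x₁ y₁) (h₂ : W.Nonsingular x₂ y₂)
    (hx : x₁ = x₂) (hy : y₁ = y₂) : Point.some _ _ h₁ = Point.some _ _ h₂ := by
  subst hx; subst hy; rfl

end Aux

open Classical in
/-- Let `K = ℚ(i)` and let `m, n ∈ ℤ[i]` (the subring of `K` generated by `i`) be nonzero with
`m² ≠ n²`, such that `m² − n²` is a square in `ℤ[i]`. Then the Mordell–Weil group of the elliptic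
curve `y² = x(x + m²)(x + n²)` over `K` contains a subgroup isomorphic to `ℤ/4ℤ ⊕ ℤ/4ℤ`. -/
theorem Z4xZ4_subgroup_over_Q_i
    (K : Type*) [Field K] [NumberField K]
    (hdeg : Module.finrank ℚ K = 2) (i : K) (hi : i ^ 2 = -1)
    (m n : K) (hm : m ∈ Subring.closure ({i} : Set K))
    (hn : n ∈ Subring.closure ({i} : Set K))
    (hm0 : m ≠ 0) (hn0 : n ≠ 0) (hmn : m ^ 2 ≠ n ^ 2)
    (hsq : ∃ r ∈ Subring.closure ({i} : Set K), r ^ 2 = m ^ 2 - n ^ 2) :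
    ∃ H : AddSubgroup (⟨0, m ^ 2 + n ^ 2, 0, m ^ 2 * n ^ 2, 0⟩ :
        WeierstrassCurve K).toAffine.Point,
      Nonempty (H ≃+ (ZMod 4 × ZMod 4)) := by
  obtain ⟨r, -, hr⟩ := hsq
  have hi0 : i ≠ 0 := by
    intro h; rw [h] at hi; norm_num at hi
  have hr0 : r ≠ 0 := by
    intro h; rw [h] at hr; exact hmn (by linear_combination -hr)
  have hmr : m + r ≠ 0 := by
    intro h
    have hrm : r = -m := by linear_combination h
    rw [hrm] at hr
    exact hn0 (sq_eq_zero_iff.mp (by linear_combination hr))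
  have hmn' : m + n ≠ 0 := fun h => hmn (by linear_combination (m - n) * h)
  set W : WeierstrassCurve.Affine K :=
    (⟨0, m ^ 2 + n ^ 2, 0, m ^ 2 * n ^ 2, 0⟩ : WeierstrassCurve K).toAffine with hWdef
  have ha₁ : W.a₁ = 0 := rfl
  have ha₂ : W.a₂ = m ^ 2 + n ^ 2 := rfl
  have ha₃ : W.a₃ = 0 := rfl
  have ha₄ : W.a₄ = m ^ 2 * n ^ 2 := rfl
  have ha₆ : W.a₆ = 0 := rfl
  have hyP : m * n * (m + n) ≠ 0 := mul_ne_zero (mul_ne_zero hm0 hn0) hmn'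
  have hyQ : i * m * r * (m + r) ≠ 0 :=
    mul_ne_zero (mul_ne_zero (mul_ne_zero hi0 hm0) hr0) hmr
  have hP : W.Nonsingular (m * n) (m * n * (m + n)) := by
    rw [nonsingular_iff', equation_iff']
    simp only [ha₁, ha₂, ha₃, ha₄, ha₆]
    refine ⟨by ring, Or.inr fun h => hyP (by linear_combination h / 2)⟩
  have hQ : W.Nonsingular (-(m ^ 2) - m * r) (i * m * r * (m + r)) := by
    rw [nonsingular_iff', equation_iff']
    simp only [ha₁, ha₂, ha₃, ha₄, ha₆]
    refine ⟨?_, Or.inr fun h => hyQ (by linear_combination h / 2)⟩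
    linear_combination (m ^ 2 * r ^ 4 + 2 * m ^ 3 * r ^ 3 + m ^ 4 * r ^ 2) * hi +
      (-(m ^ 2 * r ^ 2) - m ^ 3 * r) * hr
  have hT0 : W.Nonsingular 0 0 := by
    rw [nonsingular_iff', equation_iff']
    simp only [ha₁, ha₂, ha₃, ha₄, ha₆]
    refine ⟨by ring, Or.inl fun h => ?_⟩
    exact mul_ne_zero (pow_ne_zero 2 hm0) (pow_ne_zero 2 hn0) (by linear_combination -h)
  have hT1 : W.Nonsingular (-(m ^ 2)) 0 := by
    rw [nonsingular_iff', equation_iff']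
    simp only [ha₁, ha₂, ha₃, ha₄, ha₆]
    refine ⟨by ring, Or.inl fun h => ?_⟩
    exact mul_ne_zero (pow_ne_zero 2 hm0) (sub_ne_zero.mpr hmn) (by linear_combination -h)
  have hnegP : W.negY (m * n) (m * n * (m + n)) = -(m * n * (m + n)) := by
    simp only [negY, ha₁, ha₃]; ring
  have hnegQ : W.negY (-(m ^ 2) - m * r) (i * m * r * (m + r)) = -(i * m * r * (m + r)) := by
    simp only [negY, ha₁, ha₃]; ring
  have hyPne : m * n * (m + n) ≠ W.negY (m * n) (m * n * (m + n)) := by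
    rw [hnegP]; intro h; exact hyP (by linear_combination h / 2)
  have hyQne : i * m * r * (m + r) ≠ W.negY (-(m ^ 2) - m * r) (i * m * r * (m + r)) := by
    rw [hnegQ]; intro h; exact hyQ (by linear_combination h / 2)
  have hLP : W.slope (m * n) (m * n) (m * n * (m + n)) (m * n * (m + n)) = m + n := by
    rw [slope_of_Y_ne rfl hyPne, hnegP]
    simp only [ha₁, ha₂, ha₄]
    rw [div_eq_iff (fun h => hyP (by linear_combination h / 2))]
    ring
  have hLQ : W.slope (-(m ^ 2) - m * r) (-(m ^ 2) - m * r) (i * m * r * (m + r))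
      (i * m * r * (m + r)) = -(i * (m + r)) := by
    rw [slope_of_Y_ne rfl hyQne, hnegQ]
    simp only [ha₁, ha₂, ha₄]
    rw [div_eq_iff (fun h => hyQ (by linear_combination h / 2))]
    linear_combination (2 * m * r ^ 3 + 4 * m ^ 2 * r ^ 2 + 2 * m ^ 3 * r) * hi +
      (-(2 * m * r) - m ^ 2) * hr
  have haddP : Point.some _ _ hP + Point.some _ _ hP = Point.some _ _ hT0 := by
    rw [Point.add_self_of_Y_ne hyPne]
    refine point_eq _ _ ?_ ?_
    · rw [hLP]; simp only [addX, ha₁, ha₂]; ring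
    · rw [hLP]; simp only [addY, negAddY, addX, negY, ha₁, ha₂, ha₃]; ring
  have haddQ : Point.some _ _ hQ + Point.some _ _ hQ = Point.some _ _ hT1 := by
    rw [Point.add_self_of_Y_ne hyQne]
    refine point_eq _ _ ?_ ?_
    · rw [hLQ]; simp only [addX, ha₁, ha₂]
      linear_combination (r ^ 2 + 2 * m * r + m ^ 2) * hi + (-1 : K) * hr
    · rw [hLQ]; simp only [addY, negAddY, addX, negY, ha₁, ha₂, ha₃]
      linear_combination (i * r ^ 3 + 3 * i * m * r ^ 2 + 3 * i * m ^ 2 * r + i * m ^ 3) * hi +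
        (-(i * r) - i * m) * hr
  have haddT0 : Point.some _ _ hT0 + Point.some _ _ hT0 = 0 :=
    Point.add_self_of_Y_eq (by simp only [negY, ha₁, ha₃]; ring)
  have haddT1 : Point.some _ _ hT1 + Point.some _ _ hT1 = 0 :=
    Point.add_self_of_Y_eq (by simp only [negY, ha₁, ha₃]; ring)
  have hP2 : (2 : ℤ) • (Point.some _ _ hP) ≠ 0 := by
    rw [two_zsmul, haddP]; exact Point.some_ne_zero hT0
  have hQ2 : (2 : ℤ) • (Point.some _ _ hQ) ≠ 0 := by
    rw [two_zsmul, haddQ]; exact Point.some_ne_zero hT1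
  have hPQ : (2 : ℤ) • (Point.some _ _ hP) ≠ (2 : ℤ) • (Point.some _ _ hQ) := by
    rw [two_zsmul, two_zsmul, haddP, haddQ]
    intro h
    injection h with h1 h2
    exact pow_ne_zero 2 hm0 (by linear_combination h1)
  have hP4 : (2 : ℤ) • (Point.some _ _ hP) + (2 : ℤ) • (Point.some _ _ hP) = 0 := by
    rw [two_zsmul, haddP]; exact haddT0
  have hQ4 : (2 : ℤ) • (Point.some _ _ hQ) + (2 : ℤ) • (Point.some _ _ hQ) = 0 := by
    rw [two_zsmul, haddQ]; exact haddT1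
  exact aux_subgroup (Point.some _ _ hP) (Point.some _ _ hQ) hP2 hQ2 hPQ hP4 hQ4
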